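/- Let L₂ = {aᵐ·bⁿ·a² : m ≥ 3, n ≥ 1} over the alphabet {a, b}. Then L₂ is a single syntactic class: for every w ∈ L₂ and every nonempty word w' over {a, b}, w' is syntactically equivalent to w with respect to L₂ if and only if w' ∈ L₂. -/

import Mathlib

/-- The two-letter alphabet `{a, b}`. -/
inductive AB : Type
  | a : AB
  | b : AB

/-- Words over `{a, b}`, as elements of the free monoid (the empty word is `1`). -/
abbrev Word : Type := FreeMonoid AB

/-- The letter `a` as a word. -/
def wa : Word := FreeMonoid.of AB.a

/-- The letter `b` as a word. -/
def wb : Word := FreeMonoid.of AB.b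

/-- Syntactic equivalence of `u` and `v` with respect to the language `L`:
for all (possibly empty) words `p, q`, `p·u·q ∈ L ↔ p·v·q ∈ L`. -/
def SynEq (L : Set Word) (u v : Word) : Prop :=
  ∀ p q : Word, p * u * q ∈ L ↔ p * v * q ∈ L

/-- The language `L₂ = a²a⁺b⁺a² = {aᵐ·bⁿ·a² : m ≥ 3, n ≥ 1}`. -/
def L2 : Set Word :=
  {w | ∃ m n : ℕ, 3 ≤ m ∧ 1 ≤ n ∧ w = wa ^ m * wb ^ n * wa ^ 2}

inductive St : Type
  | s0 | s1 | s2 | s3 | t | u1 | u2 | dd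
deriving DecidableEq

open St AB

def step : St → AB → St
  | s0, .a => s1
  | s1, .a => s2
  | s2, .a => s3
  | s3, .a => s3
  | s3, .b => t
  | t, .b => t
  | t, .a => u1
  | u1, .a => u2
  | _, _ => dd

lemma foldl_snoc (s : St) (w : List AB) (c : AB) :
    List.foldl step s (w ++ [c]) = step (List.foldl step s w) c := by
  simp

lemma char (w : List AB) :
    (List.foldl step s0 w = s0 → w = []) ∧
    (List.foldl step s0 w = s1 → w = [a]) ∧
    (List.foldl step s0 w = s2 → w = [a, a]) ∧
    (List.foldl step s0 w = s3 → ∃ m, 3 ≤ m ∧ w = List.replicate m a) ∧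
    (List.foldl step s0 w = t → ∃ m n, 3 ≤ m ∧ 1 ≤ n ∧
      w = List.replicate m a ++ List.replicate n b) ∧
    (List.foldl step s0 w = u1 → ∃ m n, 3 ≤ m ∧ 1 ≤ n ∧
      w = List.replicate m a ++ List.replicate n b ++ [a]) ∧
    (List.foldl step s0 w = u2 → ∃ m n, 3 ≤ m ∧ 1 ≤ n ∧
      w = List.replicate m a ++ List.replicate n b ++ [a, a]) := by
  induction w using List.reverseRecOn with
  | nil => refine ⟨fun _ => rfl, ?_, ?_, ?_, ?_, ?_, ?_⟩ <;> (intro h; exact absurd h (by decide))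
  | append_singleton w c ih =>
    obtain ⟨h0, h1, h2, h3, ht, hu1, hu2⟩ := ih
    rw [foldl_snoc]
    rcases hr : List.foldl step s0 w with _ | _ | _ | _ | _ | _ | _ | _ <;>
      cases c <;>
      simp only [step] <;>
      refine ⟨?_, ?_, ?_, ?_, ?_, ?_, ?_⟩ <;>
      intro h <;>
      first
      | exact absurd h (by decide)
      | exact h.elim
      | exact congrArg (· ++ [a]) (h0 hr)
      | exact congrArg (· ++ [a]) (h1 hr)
      | exact ⟨3, le_refl _, congrArg (· ++ [a]) (h2 hr)⟩
      | exact (h3 hr).elim fun m ⟨hm, hw⟩ =>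
          ⟨m + 1, by omega, (congrArg (· ++ [a]) hw).trans List.replicate_succ'.symm⟩
      | exact (h3 hr).elim fun m ⟨hm, hw⟩ => ⟨m, 1, hm, le_refl _, congrArg (· ++ [b]) hw⟩
      | exact (ht hr).elim fun m hx => hx.elim fun n ⟨hm, hn, hw⟩ =>
          ⟨m, n, hm, hn, congrArg (· ++ [a]) hw⟩
      | exact (ht hr).elim fun m hx => hx.elim fun n ⟨hm, hn, hw⟩ =>
          ⟨m, n + 1, hm, by omega,
            (congrArg (· ++ [b]) hw).trans (by simp [List.replicate_succ' (n := n)])⟩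
      | exact (hu1 hr).elim fun m hx => hx.elim fun n ⟨hm, hn, hw⟩ =>
          ⟨m, n, hm, hn, (congrArg (· ++ [a]) hw).trans (by simp)⟩

lemma toList_pow (x : AB) (m : ℕ) :
    FreeMonoid.toList (FreeMonoid.of x ^ m) = List.replicate m x := by
  induction m with
  | zero => rfl
  | succ k ih =>
    rw [pow_succ, FreeMonoid.toList_mul, ih, FreeMonoid.toList_of, List.replicate_succ']

lemma toList_wa (m : ℕ) : FreeMonoid.toList (wa ^ m) = List.replicate m AB.a :=
  toList_pow AB.a m

lemma toList_wb (n : ℕ) : FreeMonoid.toList (wb ^ n) = List.replicate n AB.b :=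
  toList_pow AB.b n

lemma run_eq_u2_of_mem {w : Word} (hw : w ∈ L2) :
    List.foldl step s0 (FreeMonoid.toList w) = u2 := by
  obtain ⟨m, n, hm, hn, rfl⟩ := hw
  rw [FreeMonoid.toList_mul, FreeMonoid.toList_mul, toList_wa, toList_wb, toList_wa,
    List.foldl_append, List.foldl_append]
  have hA : List.foldl step s0 (List.replicate m a) = s3 := by
    induction m, hm using Nat.le_induction with
    | base => rfl
    | succ k hk ih => rw [List.replicate_succ', List.foldl_append, ih]; rfl
  have hB : List.foldl step s3 (List.replicate n b) = t := by
    induction n, hn using Nat.le_induction with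
    | base => rfl
    | succ k hk ih => rw [List.replicate_succ', List.foldl_append, ih]; rfl
  rw [hA, hB]; rfl

lemma mem_of_run_eq_u2 {w : Word} (hw : List.foldl step s0 (FreeMonoid.toList w) = u2) :
    w ∈ L2 := by
  obtain ⟨m, n, hm, hn, hl⟩ := (char (FreeMonoid.toList w)).2.2.2.2.2.2 hw
  refine ⟨m, n, hm, hn, FreeMonoid.toList.injective ?_⟩
  rw [hl, FreeMonoid.toList_mul, FreeMonoid.toList_mul, toList_wa, toList_wb, toList_wa]
  rfl

/-- Words in `L2` all act the same way on states. -/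
lemma run_const {w : Word} (hw : w ∈ L2) (s : St) :
    List.foldl step s (FreeMonoid.toList w) = List.foldl step s [a, a, a, b, a, a] := by
  obtain ⟨m, n, hm, hn, rfl⟩ := hw
  rw [FreeMonoid.toList_mul, FreeMonoid.toList_mul, toList_wa, toList_wb, toList_wa,
    List.foldl_append, List.foldl_append]
  have hA : ∀ s : St, List.foldl step s (List.replicate m a) =
      List.foldl step s [a, a, a] := by
    induction m, hm using Nat.le_induction with
    | base => intro s; rfl
    | succ k hk ih =>
      intro s
      rw [List.replicate_succ', List.foldl_append, ih]
      cases s <;> rfl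
  have hB : ∀ s : St, List.foldl step s (List.replicate n b) =
      List.foldl step s [b] := by
    induction n, hn using Nat.le_induction with
    | base => intro s; rfl
    | succ k hk ih =>
      intro s
      rw [List.replicate_succ', List.foldl_append, ih]
      cases s <;> rfl
  rw [hA, hB]
  cases s <;> rfl


/-- `L₂` is a single syntactic class: for `w ∈ L₂` and any nonempty word
`w'`, `w'` is syntactically equivalent to `w` with respect to `L₂` iff `w' ∈ L₂`. -/
theorem L2_single_syntactic_class (w : Word) (hw : w ∈ L2) (w' : Word) (hw' : w' ≠ 1) :
    SynEq L2 w' w ↔ w' ∈ L2 := by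
  constructor
  · intro h
    have := h 1 1
    rw [one_mul, one_mul, mul_one, mul_one] at this
    exact this.mpr hw
  · intro h p q
    have key : ∀ s, List.foldl step s (FreeMonoid.toList w') =
        List.foldl step s (FreeMonoid.toList w) := fun s =>
      (run_const h s).trans (run_const hw s).symm
    constructor <;> intro hmem <;> refine mem_of_run_eq_u2 ?_ <;>
      have h2 := run_eq_u2_of_mem hmem <;>
      simp only [FreeMonoid.toList_mul, List.foldl_append] at h2 ⊢
    · rw [key] at h2; exact h2
    · rw [← key] at h2; exact h2
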